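/- In the α-SMC algorithm, suppose that for each t the connectivity matrix α_{t−1} is F_{t−1}-measurable and almost surely satisfies Σ_{i=1}^N α_{t−1}^{ij} = 1 for every j (columns sum to one). Then for every t ≥ 1 and every bounded measurable φ : X → ℝ, almost surely E[ γ̂_t^N(φ) | F_{t−1} ] = γ̂_{t−1}^N(Q_t φ), where Q_t φ = g_{t−1} · K_t φ. -/

import Mathlib

open MeasureTheory ProbabilityTheory
open scoped BigOperators

theorem stmt12
    -- the state space and the state-space model
    {X : Type*} [MeasurableSpace X]
    (π₀ : Measure X) [IsProbabilityMeasure π₀]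
    (K : ℕ → Kernel X X) (hK : ∀ t, IsMarkovKernel (K t))
    (g : ℕ → X → ℝ) (hgmeas : ∀ t, Measurable (g t)) (hgpos : ∀ t x, 0 < g t x)
    (κg : ℝ) (hgbd : ∀ t x, g t x ≤ κg)
    -- the underlying probability space
    {Ω : Type*} [m0 : MeasurableSpace Ω] (P : Measure Ω) [IsProbabilityMeasure P]
    -- the α-SMC particle system with `N` particles
    (N : ℕ) (hN : 1 ≤ N)
    (F : ℕ → MeasurableSpace Ω) (hFle : ∀ t, F t ≤ m0) (hFmono : Monotone F)
    (ξ : ℕ → Fin N → Ω → X) (A : ℕ → Ω → Matrix (Fin N) (Fin N) ℝ)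
    (W : ℕ → Fin N → Ω → ℝ)
    (hξmeas : ∀ t i, Measurable[F t] (ξ t i))
    -- `α_{t}` is `F_{t}`-measurable, entrywise
    (hAmeas : ∀ t i j, Measurable[F t] (fun ω => A t ω i j))
    -- the connectivity matrices are row-stochastic
    (hAnn : ∀ t ω i j, 0 ≤ A t ω i j)
    (hArow : ∀ t ω i, ∑ j, A t ω i j = 1)
    -- the columns of the connectivity matrices sum to one
    (hAcol : ∀ t ω j, ∑ i, A t ω i j = 1)
    -- initial weights and weight recursion
    (hW0 : ∀ i ω, W 0 i ω = 1)
    (hWrec : ∀ t i ω, W (t + 1) i ω = ∑ j, A t ω i j * W t j ω * g t (ξ t j ω))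
    -- initialisation: i.i.d. samples from `π₀`
    (hξ0meas : ∀ i, Measurable (ξ 0 i))
    (hξ0indep : iIndepFun (ξ 0) P)
    (hξ0law : ∀ i, Measure.map (ξ 0 i) P = π₀)
    -- conditionally on `F t`, the particles at time `t+1` are independent with the
    -- prescribed mixture distributions
    (hcond : ∀ t (φ : Fin N → X → ℝ), (∀ i, Measurable (φ i)) → (∀ i x, |φ i x| ≤ 1) →
      P[(fun ω => ∏ i, φ i (ξ (t + 1) i ω)) | F t]
        =ᵐ[P] fun ω => ∏ i, ((W (t + 1) i ω)⁻¹ *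
            ∑ j, A t ω i j * W t j ω * g t (ξ t j ω) * ∫ y, φ i y ∂(K (t + 1) (ξ t j ω)))) :
    -- conclusion: `E[γ̂_{t+1}^N(φ) | F_t] = γ̂_t^N(Q_{t+1} φ)` almost surely
    ∀ t (φ : X → ℝ), Measurable φ → (∃ b : ℝ, ∀ x, |φ x| ≤ b) →
      P[(fun ω => (N : ℝ)⁻¹ * ∑ i, W (t + 1) i ω * φ (ξ (t + 1) i ω)) | F t]
        =ᵐ[P] fun ω => (N : ℝ)⁻¹ * ∑ i, W t i ω *
          (g t (ξ t i ω) * ∫ y, φ y ∂(K (t + 1) (ξ t i ω))) := by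
  -- a positive uniform bound on `g`
  set κ : ℝ := max κg 1 with hκdef
  have hκ1 : (1 : ℝ) ≤ κ := le_max_right _ _
  have hκ0 : (0 : ℝ) < κ := lt_of_lt_of_le one_pos hκ1
  have hgκ : ∀ t x, g t x ≤ κ := fun t x => le_trans (hgbd t x) (le_max_left _ _)
  -- positivity of the weights
  have hWpos : ∀ t i ω, 0 < W t i ω := by
    intro t
    induction t with
    | zero => intro i ω; rw [hW0]; exact one_pos
    | succ t ih =>
      intro i ω
      rw [hWrec]
      refine Finset.sum_pos' (fun j _ => mul_nonneg (mul_nonneg (hAnn t ω i j)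
        (le_of_lt (ih j ω))) (le_of_lt (hgpos t (ξ t j ω)))) ?_
      by_contra h
      push_neg at h
      have hall : ∀ j, A t ω i j = 0 := by
        intro j
        by_contra hA
        have hApos : 0 < A t ω i j := lt_of_le_of_ne (hAnn t ω i j) (Ne.symm hA)
        exact absurd (h j (Finset.mem_univ j))
          (not_le.mpr (mul_pos (mul_pos hApos (ih j ω)) (hgpos t (ξ t j ω))))
      have := hArow t ω i
      simp [hall] at this
  -- boundedness of the weights
  have hWbd : ∀ t i ω, W t i ω ≤ κ ^ t := by
    intro t
    induction t with
    | zero => intro i ω; rw [hW0]; simp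
    | succ t ih =>
      intro i ω
      rw [hWrec]
      calc ∑ j, A t ω i j * W t j ω * g t (ξ t j ω)
          ≤ ∑ j, A t ω i j * (κ ^ t * κ) := by
            refine Finset.sum_le_sum fun j _ => ?_
            have h1 := ih j ω
            have h2 := hgκ t (ξ t j ω)
            have h3 := hAnn t ω i j
            have h4 := hWpos t j ω
            have h5 := hgpos t (ξ t j ω)
            have h6 : W t j ω * g t (ξ t j ω) ≤ κ ^ t * κ :=
              mul_le_mul h1 h2 (le_of_lt h5) (pow_nonneg (le_of_lt hκ0) t)
            rw [mul_assoc]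
            exact mul_le_mul_of_nonneg_left h6 h3
        _ = κ ^ (t + 1) := by
            rw [← Finset.sum_mul, hArow, one_mul, pow_succ]
  -- measurability of the weights
  have hWFmeas : ∀ t i, Measurable[F t] (W t i) := by
    intro t
    induction t with
    | zero =>
      intro i
      have : W 0 i = fun _ => (1 : ℝ) := funext fun ω => hW0 i ω
      rw [this]; exact measurable_const
    | succ t ih =>
      intro i
      have : W (t + 1) i = fun ω => ∑ j, A t ω i j * W t j ω * g t (ξ t j ω) :=
        funext fun ω => hWrec t i ω
      rw [this]
      have hm : Measurable[F t] fun ω => ∑ j, A t ω i j * W t j ω * g t (ξ t j ω) :=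
        Finset.measurable_sum _ fun j _ =>
          ((hAmeas t i j).mul (ih j)).mul ((hgmeas t).comp (hξmeas t j))
      exact hm.mono (hFmono (Nat.le_succ t)) le_rfl
  have hWstep : ∀ t i, Measurable[F t] (W (t + 1) i) := by
    intro t i
    have : W (t + 1) i = fun ω => ∑ j, A t ω i j * W t j ω * g t (ξ t j ω) :=
      funext fun ω => hWrec t i ω
    rw [this]
    exact Finset.measurable_sum _ fun j _ =>
      ((hAmeas t i j).mul (hWFmeas t j)).mul ((hgmeas t).comp (hξmeas t j))
  -- integrability of bounded measurable functions
  have hint : ∀ (f : Ω → ℝ) (C : ℝ), Measurable f → (∀ ω, |f ω| ≤ C) → Integrable f P := by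
    intro f C hf hb
    exact (integrable_const C).mono' hf.aestronglyMeasurable
      (Filter.Eventually.of_forall fun ω => by simpa [Real.norm_eq_abs] using hb ω)
  intro t φ hφm hφb
  obtain ⟨b, hb⟩ := hφb
  set c : ℝ := max b 1 with hcdef
  have hc1 : (1 : ℝ) ≤ c := le_max_right _ _
  have hc0 : (0 : ℝ) < c := lt_of_lt_of_le one_pos hc1
  have hcne : c ≠ 0 := ne_of_gt hc0
  have hφc : ∀ x, |φ x| ≤ c := fun x => le_trans (hb x) (le_max_left _ _)
  -- bound on the kernel integrals
  have hIbd : ∀ x, |∫ y, φ y ∂(K (t + 1) x)| ≤ c := by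
    intro x
    haveI := hK (t + 1)
    have := norm_integral_le_of_norm_le_const (μ := K (t + 1) x) (f := φ) (C := c)
      (Filter.Eventually.of_forall fun y => by simpa [Real.norm_eq_abs] using hφc y)
    simpa [Real.norm_eq_abs] using this
  -- measurability w.r.t. m0
  have hWm0 : ∀ i, Measurable (W (t + 1) i) := fun i => (hWstep t i).mono (hFle t) le_rfl
  have hξm0 : ∀ i, Measurable (fun ω => φ (ξ (t + 1) i ω)) := fun i =>
    hφm.comp ((hξmeas (t + 1) i).mono (hFle (t + 1)) le_rfl)
  -- integrability of the summands
  have hintWφ : ∀ i, Integrable (fun ω => W (t + 1) i ω * φ (ξ (t + 1) i ω)) P := by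
    intro i
    refine hint _ (κ ^ (t + 1) * c) ((hWm0 i).mul (hξm0 i)) fun ω => ?_
    rw [abs_mul, abs_of_pos (hWpos (t + 1) i ω)]
    exact mul_le_mul (hWbd (t + 1) i ω) (hφc _) (abs_nonneg _)
      (le_of_lt (pow_pos hκ0 _))
  have hintφ : ∀ i, Integrable (fun ω => φ (ξ (t + 1) i ω)) P := fun i =>
    hint _ c (hξm0 i) fun ω => hφc _
  -- the key identity for each particle
  have key : ∀ i : Fin N, P[(fun ω => W (t + 1) i ω * φ (ξ (t + 1) i ω)) | F t]
      =ᵐ[P] fun ω => ∑ j, A t ω i j * W t j ω * g t (ξ t j ω) *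
        ∫ y, φ y ∂(K (t + 1) (ξ t j ω)) := by
    intro i
    have hcd := hcond t (fun k x => if k = i then c⁻¹ * φ x else 1)
      (by
        intro k
        by_cases h : k = i
        · simp only [h, if_pos rfl]; exact measurable_const.mul hφm
        · simp only [if_neg h]; exact measurable_const)
      (by
        intro k x
        by_cases h : k = i
        · simp only [h, eq_self_iff_true, if_true]
          rw [abs_mul, abs_of_pos (inv_pos.mpr hc0)]
          calc c⁻¹ * |φ x| ≤ c⁻¹ * c :=
                mul_le_mul_of_nonneg_left (hφc x) (le_of_lt (inv_pos.mpr hc0))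
            _ = 1 := inv_mul_cancel₀ hcne
        · simp [if_neg h])
    have hL : (fun ω => ∏ k, (fun (k : Fin N) (x : X) => if k = i then c⁻¹ * φ x else 1) k
        (ξ (t + 1) k ω)) = fun ω => c⁻¹ * φ (ξ (t + 1) i ω) := by
      funext ω
      simp only []
      rw [Finset.prod_eq_single i
        (fun k _ hk => by simp [if_neg hk]) (fun h => absurd (Finset.mem_univ i) h)]
      simp
    have hR : (fun ω => ∏ k, ((W (t + 1) k ω)⁻¹ *
        ∑ j, A t ω k j * W t j ω * g t (ξ t j ω) *
          ∫ y, (fun (k : Fin N) (x : X) => if k = i then c⁻¹ * φ x else 1) k y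
          ∂(K (t + 1) (ξ t j ω))))
        = fun ω => c⁻¹ * ((W (t + 1) i ω)⁻¹ *
          ∑ j, A t ω i j * W t j ω * g t (ξ t j ω) * ∫ y, φ y ∂(K (t + 1) (ξ t j ω))) := by
      funext ω
      haveI := hK (t + 1)
      rw [Finset.prod_eq_single i ?_ (fun h => absurd (Finset.mem_univ i) h)]
      · simp only [eq_self_iff_true, if_true]
        rw [show (∑ j, A t ω i j * W t j ω * g t (ξ t j ω) *
            ∫ y, c⁻¹ * φ y ∂(K (t + 1) (ξ t j ω)))
            = c⁻¹ * ∑ j, A t ω i j * W t j ω * g t (ξ t j ω) *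
              ∫ y, φ y ∂(K (t + 1) (ξ t j ω)) from by
          rw [Finset.mul_sum]
          refine Finset.sum_congr rfl fun j _ => ?_
          rw [integral_const_mul]; ring]
        ring
      · intro k _ hk
        simp only [if_neg hk, MeasureTheory.integral_const, measure_univ, ENNReal.toReal_one, probReal_univ,
          smul_eq_mul, one_mul, mul_one]
        rw [← hWrec t k ω]
        exact inv_mul_cancel₀ (ne_of_gt (hWpos (t + 1) k ω))
    rw [hL, hR] at hcd
    -- remove the factor c⁻¹
    have h1 : P[(fun ω => φ (ξ (t + 1) i ω)) | F t] =ᵐ[P]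
        fun ω => (W (t + 1) i ω)⁻¹ *
          ∑ j, A t ω i j * W t j ω * g t (ξ t j ω) * ∫ y, φ y ∂(K (t + 1) (ξ t j ω)) := by
      have hfun : (fun ω => φ (ξ (t + 1) i ω))
          = c • fun ω => c⁻¹ * φ (ξ (t + 1) i ω) := by
        funext ω
        simp only [Pi.smul_apply, smul_eq_mul]
        field_simp
      calc P[(fun ω => φ (ξ (t + 1) i ω)) | F t]
          = P[c • fun ω => c⁻¹ * φ (ξ (t + 1) i ω) | F t] := by rw [hfun]
        _ =ᵐ[P] c • P[(fun ω => c⁻¹ * φ (ξ (t + 1) i ω)) | F t] := condExp_smul c _ _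
        _ =ᵐ[P] fun ω => (W (t + 1) i ω)⁻¹ *
            ∑ j, A t ω i j * W t j ω * g t (ξ t j ω) *
              ∫ y, φ y ∂(K (t + 1) (ξ t j ω)) := by
            filter_upwards [hcd] with ω hω
            simp only [Pi.smul_apply, smul_eq_mul, hω]
            rw [← mul_assoc, mul_inv_cancel₀ hcne, one_mul]
    -- pull out the F_t-measurable factor W (t+1) i
    have h2 := condExp_mul_of_stronglyMeasurable_left (μ := P) (m := F t)
      (f := W (t + 1) i) (g := fun ω => φ (ξ (t + 1) i ω))
      (hWstep t i).stronglyMeasurable (hintWφ i) (hintφ i)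
    refine h2.trans ?_
    filter_upwards [h1] with ω hω
    simp only [Pi.mul_apply, hω]
    rw [← mul_assoc, mul_inv_cancel₀ (ne_of_gt (hWpos (t + 1) i ω)), one_mul]
  -- assemble: linearity of conditional expectation
  have hfun : (fun ω => (N : ℝ)⁻¹ * ∑ i, W (t + 1) i ω * φ (ξ (t + 1) i ω))
      = (N : ℝ)⁻¹ • ∑ i : Fin N, fun ω => W (t + 1) i ω * φ (ξ (t + 1) i ω) := by
    funext ω
    simp [Finset.sum_apply]
  rw [hfun]
  calc P[(N : ℝ)⁻¹ • ∑ i : Fin N, fun ω => W (t + 1) i ω * φ (ξ (t + 1) i ω) | F t]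
      =ᵐ[P] (N : ℝ)⁻¹ • P[∑ i : Fin N, fun ω => W (t + 1) i ω * φ (ξ (t + 1) i ω) | F t] :=
        condExp_smul _ _ _
    _ =ᵐ[P] (N : ℝ)⁻¹ • ∑ i : Fin N,
        P[(fun ω => W (t + 1) i ω * φ (ξ (t + 1) i ω)) | F t] := by
        filter_upwards [condExp_finsetSum (fun i _ => hintWφ i) (m := F t)] with ω hω
        rw [Pi.smul_apply, Pi.smul_apply, hω]
    _ =ᵐ[P] fun ω => (N : ℝ)⁻¹ * ∑ i, W t i ω *
        (g t (ξ t i ω) * ∫ y, φ y ∂(K (t + 1) (ξ t i ω))) := by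
        have hall := MeasureTheory.ae_all_iff.mpr key
        filter_upwards [hall] with ω hω
        simp only [Pi.smul_apply, Finset.sum_apply, smul_eq_mul]
        congr 1
        rw [Finset.sum_congr rfl (fun i _ => hω i), Finset.sum_comm]
        refine Finset.sum_congr rfl fun j _ => ?_
        calc ∑ i, A t ω i j * W t j ω * g t (ξ t j ω) *
              ∫ y, φ y ∂(K (t + 1) (ξ t j ω))
            = (∑ i, A t ω i j) * (W t j ω * (g t (ξ t j ω) *
              ∫ y, φ y ∂(K (t + 1) (ξ t j ω)))) := by
              rw [Finset.sum_mul]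
              exact Finset.sum_congr rfl fun i _ => by ring
          _ = W t j ω * (g t (ξ t j ω) * ∫ y, φ y ∂(K (t + 1) (ξ t j ω))) := by
              rw [hAcol, one_mul]
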